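/- Let y ∈ ℝⁿ and let X_* ∈ ℝ^{n×p}, X₀ ∈ ℝ^{n×q₀}, X₁ ∈ ℝ^{n×q₁}. Let H₀ be the orthogonal projection of ℝⁿ onto the column span of X₀. Assume the concatenated matrices [X_* X₀] and [X_* X₀ X₁] both have full column rank, and assume the orthogonality condition X_*ᵀ (I − H₀) X₁ = 0. Then the OLS coefficient block on X_* from regressing y on (X_*, X₀) equals the OLS coefficient block on X_* from regressing y on (X_*, X₀, X₁): if (β̂_*^M, β̂₀^M) minimizes ‖y − X_* β_* − X₀ β₀‖² and (β̂_*, β̂₀, β̂₁) minimizes ‖y − X_* β_* − X₀ β₀ − X₁ β₁‖², then β̂_*^M = β̂_*. -/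

import Mathlib

open Finset Matrix

private lemma quad_zero {b c : ℝ} (hc : 0 ≤ c)
    (h : ∀ t : ℝ, 0 ≤ c * t ^ 2 - 2 * b * t) : b = 0 := by
  have hc1 : 0 < c + 1 := by linarith
  have h1 := h (b / (c + 1))
  have hb : b = (b / (c + 1)) * (c + 1) := by field_simp
  set s := b / (c + 1) with hs
  have hs0 : s = 0 := by nlinarith [sq_nonneg s]
  rw [hb, hs0, zero_mul]

private lemma crit {n : ℕ} {u v : Fin n → ℝ}
    (h : ∀ t : ℝ, ∑ i, (u i) ^ 2 ≤ ∑ i, (u i - t * v i) ^ 2) :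
    ∑ i, u i * v i = 0 := by
  apply quad_zero (c := ∑ i, (v i) ^ 2)
    (Finset.sum_nonneg fun i _ => sq_nonneg _)
  intro t
  have ht := h t
  have e1 : ∑ i, (u i - t * v i) ^ 2 =
      ∑ i, ((u i) ^ 2 - (u i * v i) * (2 * t) + (v i) ^ 2 * t ^ 2) :=
    Finset.sum_congr rfl fun i _ => by ring
  rw [e1, Finset.sum_add_distrib, Finset.sum_sub_distrib, ← Finset.sum_mul,
    ← Finset.sum_mul] at ht
  linarith

/-- For a symmetric matrix, `⟨A u, v⟩ = ⟨u, A v⟩`. -/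
private lemma dot_symm {n : ℕ} {A : Matrix (Fin n) (Fin n) ℝ} (hA : Aᵀ = A)
    (u v : Fin n → ℝ) : u ⬝ᵥ (A *ᵥ v) = (A *ᵥ u) ⬝ᵥ v := by
  rw [Matrix.dotProduct_mulVec, ← hA, Matrix.vecMul_transpose, hA]

/-- FWL-type invariance of a coefficient block.  If the block `Xs` is
orthogonal to the residual of `X₁` after projecting out `X₀` (i.e.
`Xsᵀ (I − H₀) X₁ = 0`, where `H₀` is the orthogonal projection onto the column span of
`X₀`), and both concatenated designs have full column rank, then the OLS coefficient
block on `Xs` is the same whether or not `X₁` is included in the regression. -/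
theorem ols_block_invariance
    {n p q₀ q₁ : ℕ}
    (y : Fin n → ℝ)
    (Xs : Matrix (Fin n) (Fin p) ℝ)
    (X₀ : Matrix (Fin n) (Fin q₀) ℝ)
    (X₁ : Matrix (Fin n) (Fin q₁) ℝ)
    -- H₀ is the orthogonal projection onto the column span of X₀
    (H₀ : Matrix (Fin n) (Fin n) ℝ)
    (hH₀symm : H₀ᵀ = H₀)
    (hH₀idem : H₀ * H₀ = H₀)
    (hH₀fix : H₀ * X₀ = X₀)
    (hH₀range : ∀ v : Fin n → ℝ, ∃ w : Fin q₀ → ℝ, H₀.mulVec v = X₀.mulVec w)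
    -- full column rank of the concatenated designs
    (hrank1 : (Matrix.fromCols Xs X₀).rank = p + q₀)
    (hrank2 : (Matrix.fromCols (Matrix.fromCols Xs X₀) X₁).rank = p + q₀ + q₁)
    -- orthogonality condition
    (horth : Xsᵀ * (1 - H₀) * X₁ = 0)
    -- OLS estimates from the two regressions
    (βsM : Fin p → ℝ) (β₀M : Fin q₀ → ℝ)
    (hMmin : ∀ (bs : Fin p → ℝ) (b0 : Fin q₀ → ℝ),
      ∑ i : Fin n, (y i - (Xs.mulVec βsM i + X₀.mulVec β₀M i)) ^ 2 ≤
        ∑ i : Fin n, (y i - (Xs.mulVec bs i + X₀.mulVec b0 i)) ^ 2)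
    (βs : Fin p → ℝ) (β₀ : Fin q₀ → ℝ) (β₁ : Fin q₁ → ℝ)
    (hmin : ∀ (bs : Fin p → ℝ) (b0 : Fin q₀ → ℝ) (b1 : Fin q₁ → ℝ),
      ∑ i : Fin n, (y i - (Xs.mulVec βs i + X₀.mulVec β₀ i + X₁.mulVec β₁ i)) ^ 2 ≤
        ∑ i : Fin n, (y i - (Xs.mulVec bs i + X₀.mulVec b0 i + X₁.mulVec b1 i)) ^ 2) :
    βsM = βs := by
  classical
  set M : Matrix (Fin n) (Fin n) ℝ := 1 - H₀ with hM
  have hMsymm : Mᵀ = M := by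
    simp [hM, Matrix.transpose_sub, hH₀symm]
  have hMX₀ : M * X₀ = 0 := by
    simp [hM, Matrix.sub_mul, hH₀fix]
  -- residual of the small regression
  set r' : Fin n → ℝ := fun i => y i - (Xs.mulVec βsM i + X₀.mulVec β₀M i) with hr'
  -- residual of the big regression
  set r : Fin n → ℝ :=
    fun i => y i - (Xs.mulVec βs i + X₀.mulVec β₀ i + X₁.mulVec β₁ i) with hr
  -- normal equations, dot-product form
  have hsXs : ∀ d : Fin p → ℝ, ∑ i, r' i * (Xs *ᵥ d) i = 0 := by
    intro d
    apply crit
    intro t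
    have h2 := hMmin (βsM + t • d) β₀M
    have e : ∀ i : Fin n,
        y i - (Xs.mulVec (βsM + t • d) i + X₀.mulVec β₀M i)
          = r' i - t * (Xs *ᵥ d) i := by
      intro i
      simp [hr', Matrix.mulVec_add, Matrix.mulVec_smul]
      ring
    simp only [e] at h2
    exact h2
  have hsX₀ : ∀ d : Fin q₀ → ℝ, ∑ i, r' i * (X₀ *ᵥ d) i = 0 := by
    intro d
    apply crit
    intro t
    have h2 := hMmin βsM (β₀M + t • d)
    have e : ∀ i : Fin n,
        y i - (Xs.mulVec βsM i + X₀.mulVec (β₀M + t • d) i)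
          = r' i - t * (X₀ *ᵥ d) i := by
      intro i
      simp [hr', Matrix.mulVec_add, Matrix.mulVec_smul]
      ring
    simp only [e] at h2
    exact h2
  have hbXs : ∀ d : Fin p → ℝ, ∑ i, r i * (Xs *ᵥ d) i = 0 := by
    intro d
    apply crit
    intro t
    have h2 := hmin (βs + t • d) β₀ β₁
    have e : ∀ i : Fin n,
        y i - (Xs.mulVec (βs + t • d) i + X₀.mulVec β₀ i + X₁.mulVec β₁ i)
          = r i - t * (Xs *ᵥ d) i := by
      intro i
      simp [hr, Matrix.mulVec_add, Matrix.mulVec_smul]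
      ring
    simp only [e] at h2
    exact h2
  have hbX₀ : ∀ d : Fin q₀ → ℝ, ∑ i, r i * (X₀ *ᵥ d) i = 0 := by
    intro d
    apply crit
    intro t
    have h2 := hmin βs (β₀ + t • d) β₁
    have e : ∀ i : Fin n,
        y i - (Xs.mulVec βs i + X₀.mulVec (β₀ + t • d) i + X₁.mulVec β₁ i)
          = r i - t * (X₀ *ᵥ d) i := by
      intro i
      simp [hr, Matrix.mulVec_add, Matrix.mulVec_smul]
      ring
    simp only [e] at h2
    exact h2
  -- matrix form of the Xs-normal equations
  have hXsT : ∀ (s : Fin n → ℝ), (∀ d : Fin p → ℝ, ∑ i, s i * (Xs *ᵥ d) i = 0) →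
      Xsᵀ *ᵥ s = 0 := by
    intro s hs
    funext j
    have := hs (Pi.single j 1)
    simpa [Matrix.mulVec_single, Matrix.mulVec, dotProduct, Matrix.transpose_apply,
      Pi.single_apply, mul_ite, mul_one, mul_zero, Finset.sum_ite_eq', mul_comm] using this
  have hXsTr' : Xsᵀ *ᵥ r' = 0 := hXsT r' hsXs
  have hXsTr : Xsᵀ *ᵥ r = 0 := hXsT r hbXs
  -- H₀ annihilates both residuals
  have hH₀kill : ∀ (s : Fin n → ℝ), (∀ d : Fin q₀ → ℝ, ∑ i, s i * (X₀ *ᵥ d) i = 0) →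
      H₀ *ᵥ s = 0 := by
    intro s hs
    obtain ⟨w, hw⟩ := hH₀range s
    have hdot : (H₀ *ᵥ s) ⬝ᵥ (H₀ *ᵥ s) = 0 := by
      have h1 : (H₀ *ᵥ s) ⬝ᵥ (H₀ *ᵥ s) = s ⬝ᵥ (H₀ *ᵥ (H₀ *ᵥ s)) :=
        (dot_symm hH₀symm s (H₀ *ᵥ s)).symm
      rw [h1, Matrix.mulVec_mulVec, hH₀idem, hw]
      simpa [dotProduct] using hs w
    have hsum : ∑ i, ((H₀ *ᵥ s) i) ^ 2 = 0 := by
      simpa [dotProduct, sq] using hdot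
    funext i
    have := (Finset.sum_eq_zero_iff_of_nonneg
      (fun i _ => sq_nonneg ((H₀ *ᵥ s) i))).mp hsum i (Finset.mem_univ i)
    exact pow_eq_zero_iff (two_ne_zero) |>.mp this
  have hH₀r' : H₀ *ᵥ r' = 0 := hH₀kill r' hsX₀
  have hH₀r : H₀ *ᵥ r = 0 := hH₀kill r hbX₀
  have hMr' : M *ᵥ r' = r' := by
    simp [hM, Matrix.sub_mulVec, hH₀r']
  have hMr : M *ᵥ r = r := by
    simp [hM, Matrix.sub_mulVec, hH₀r]
  -- the common normal equation  (Xsᵀ M Xs) β = Xsᵀ M y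
  set A : Matrix (Fin p) (Fin p) ℝ := Xsᵀ * M * Xs with hA
  have hsmall : A *ᵥ βsM = (Xsᵀ * M) *ᵥ y := by
    have hXsβ : Xs *ᵥ βsM = (y - X₀ *ᵥ β₀M) - r' := by
      funext i; simp only [Pi.sub_apply, hr']; ring
    have h0 : M *ᵥ (X₀ *ᵥ β₀M) = 0 := by
      rw [Matrix.mulVec_mulVec, hMX₀]; simp
    calc A *ᵥ βsM = Xsᵀ *ᵥ (M *ᵥ (Xs *ᵥ βsM)) := by
          rw [Matrix.mulVec_mulVec, Matrix.mulVec_mulVec]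
      _ = Xsᵀ *ᵥ (M *ᵥ y) := by
          simp [hXsβ, Matrix.mulVec_sub, hMr', h0, Matrix.mulVec_zero, hXsTr']
      _ = (Xsᵀ * M) *ᵥ y := Matrix.mulVec_mulVec _ _ _
  have hbig : A *ᵥ βs = (Xsᵀ * M) *ᵥ y := by
    have hXsβ : Xs *ᵥ βs = ((y - X₀ *ᵥ β₀) - X₁ *ᵥ β₁) - r := by
      funext i; simp only [Pi.sub_apply, hr]; ring
    have h0 : M *ᵥ (X₀ *ᵥ β₀) = 0 := by
      rw [Matrix.mulVec_mulVec, hMX₀]; simp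
    have hX₁0 : Xsᵀ *ᵥ (M *ᵥ (X₁ *ᵥ β₁)) = 0 := by
      rw [Matrix.mulVec_mulVec, Matrix.mulVec_mulVec, horth]
      simp
    calc A *ᵥ βs = Xsᵀ *ᵥ (M *ᵥ (Xs *ᵥ βs)) := by
          rw [Matrix.mulVec_mulVec, Matrix.mulVec_mulVec]
      _ = Xsᵀ *ᵥ (M *ᵥ y) := by
          have horth' : Xsᵀ * (M * X₁) = 0 := by rw [← Matrix.mul_assoc]; exact horth
          simp [hXsβ, Matrix.mulVec_sub, hMr, h0, Matrix.mulVec_zero, hXsTr, hX₁0,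
            Matrix.mulVec_mulVec, horth', Matrix.zero_mulVec]
      _ = (Xsᵀ * M) *ᵥ y := Matrix.mulVec_mulVec _ _ _
  -- injectivity of A on directions, via full column rank of [Xs X₀]
  have hker : LinearMap.ker (Matrix.fromCols Xs X₀).mulVecLin = ⊥ := by
    have h2 := LinearMap.finrank_range_add_finrank_ker
      (Matrix.fromCols Xs X₀).mulVecLin
    rw [Module.finrank_fintype_fun_eq_card] at h2
    have h3 : Module.finrank ℝ
        (LinearMap.range (Matrix.fromCols Xs X₀).mulVecLin) = p + q₀ := hrank1
    rw [h3] at h2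
    simp only [Fintype.card_sum, Fintype.card_fin] at h2
    have : Module.finrank ℝ
        (LinearMap.ker (Matrix.fromCols Xs X₀).mulVecLin) = 0 := by omega
    exact Submodule.finrank_eq_zero.mp this
  -- conclude
  have hdiff : A *ᵥ (βsM - βs) = 0 := by
    rw [Matrix.mulVec_sub, hsmall, hbig, sub_self]
  set v : Fin p → ℝ := βsM - βs with hv
  have hMu : M *ᵥ (Xs *ᵥ v) = 0 := by
    have hd : v ⬝ᵥ (A *ᵥ v) = 0 := by rw [hdiff]; simp
    have h1 : v ⬝ᵥ (A *ᵥ v) = (Xs *ᵥ v) ⬝ᵥ (M *ᵥ (Xs *ᵥ v)) := by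
      rw [hA, ← Matrix.mulVec_mulVec, ← Matrix.mulVec_mulVec,
        Matrix.dotProduct_mulVec, Matrix.vecMul_transpose]
    have h2 : (M *ᵥ (Xs *ᵥ v)) ⬝ᵥ (M *ᵥ (Xs *ᵥ v)) = 0 := by
      calc (M *ᵥ (Xs *ᵥ v)) ⬝ᵥ (M *ᵥ (Xs *ᵥ v))
          = (Xs *ᵥ v) ⬝ᵥ (M *ᵥ (M *ᵥ (Xs *ᵥ v))) :=
            (dot_symm hMsymm (Xs *ᵥ v) (M *ᵥ (Xs *ᵥ v))).symm
        _ = (Xs *ᵥ v) ⬝ᵥ ((M * M) *ᵥ (Xs *ᵥ v)) := by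
            rw [Matrix.mulVec_mulVec]
        _ = (Xs *ᵥ v) ⬝ᵥ (M *ᵥ (Xs *ᵥ v)) := by
            have hMidem : M * M = M := by
              simp [hM, Matrix.sub_mul, Matrix.mul_sub, hH₀idem]
            rw [hMidem]
        _ = 0 := by rw [← h1]; exact hd
    have hsum : ∑ i, ((M *ᵥ (Xs *ᵥ v)) i) ^ 2 = 0 := by
      simpa [dotProduct, sq] using h2
    funext i
    have := (Finset.sum_eq_zero_iff_of_nonneg
      (fun i _ => sq_nonneg ((M *ᵥ (Xs *ᵥ v)) i))).mp hsum i (Finset.mem_univ i)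
    exact pow_eq_zero_iff (two_ne_zero) |>.mp this
  have hfix : Xs *ᵥ v = H₀ *ᵥ (Xs *ᵥ v) := by
    have : (1 : Matrix (Fin n) (Fin n) ℝ) *ᵥ (Xs *ᵥ v) - H₀ *ᵥ (Xs *ᵥ v) = 0 := by
      rw [← Matrix.sub_mulVec, ← hM]; exact hMu
    have h1 : Xs *ᵥ v - H₀ *ᵥ (Xs *ᵥ v) = 0 := by simpa using this
    exact sub_eq_zero.mp h1
  obtain ⟨w, hw⟩ := hH₀range (Xs *ᵥ v)
  have hzero : (Matrix.fromCols Xs X₀) *ᵥ (Sum.elim v (-w)) = 0 := by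
    rw [show (Sum.elim v (-w)) = (v ⊕ᵥ (-w)) from rfl,
      Matrix.fromCols_mulVec_sumElim]
    rw [hfix, hw]
    simp [Matrix.mulVec_neg]
  have hmem : (Sum.elim v (-w)) ∈
      LinearMap.ker (Matrix.fromCols Xs X₀).mulVecLin := by
    simpa [Matrix.mulVecLin_apply] using hzero
  rw [hker, Submodule.mem_bot] at hmem
  have hv0 : v = 0 := by
    funext j
    have := congrFun hmem (Sum.inl j)
    simpa using this
  exact sub_eq_zero.mp hv0
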